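/- Let G be a finite connected simple graph with h_G ≥ 2, let e₁ be an edge of G, and let q be a prime power. Then q divides the number of points β ∈ F_q^{E∖{e₁}} with (∂φ_G/∂x_{e₁})(β) = 0 and (φ_G|_{x_{e₁}=0})(β) = 0 (both polynomials do not involve x_{e₁}). -/

import Mathlib

open MvPolynomial

variable {V : Type}

/-- `T ⊆ E(G)` is a spanning tree of `G`: a set of `n_G = |V| - 1` edges such that the
subgraph `(V, T)` is connected. -/
def SimpleGraph.IsSpanningTree [Fintype V] (G : SimpleGraph V) (T : Finset G.edgeSet) : Prop :=
  T.card = Fintype.card V - 1 ∧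
    (SimpleGraph.fromEdgeSet (Subtype.val '' (T : Set G.edgeSet))).Connected

-- The dual graph polynomial `φ_G = Σ_T Π_{e ∈ T} x_e`, summed over all spanning trees.
open scoped Classical in
noncomputable def dualPoly [Fintype V] (R : Type) [CommRing R] (G : SimpleGraph V)
    [Fintype G.edgeSet] : MvPolynomial G.edgeSet R :=
  ∑ T ∈ Finset.univ.filter (fun T : Finset G.edgeSet => G.IsSpanningTree T), ∏ e ∈ T, X e

-- `setZero k p` is the polynomial `p` with the variable `x_k` set to `0`.
open scoped Classical in
noncomputable def setZero {σ R : Type*} [CommRing R] (k : σ) (p : MvPolynomial σ R) :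
    MvPolynomial σ R :=
  aeval (fun i => if i = k then 0 else X i) p

namespace Stmt8

open Matrix SimpleGraph Finset

/-! ### Orientation of `Sym2` elements -/

lemma sym2_exists_rep (s : Sym2 V) : ∃ p : V × V, s = s(p.1, p.2) := by
  induction s using Sym2.ind with | _ x y => exact ⟨(x, y), rfl⟩

noncomputable def pa (s : Sym2 V) : V := (Classical.choose (sym2_exists_rep s)).1
noncomputable def pb (s : Sym2 V) : V := (Classical.choose (sym2_exists_rep s)).2

lemma pa_pb (s : Sym2 V) : s = s(pa s, pb s) := Classical.choose_spec (sym2_exists_rep s)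

lemma pa_ne_pb {s : Sym2 V} (h : ¬ s.IsDiag) : pa s ≠ pb s := by
  intro hc
  apply h
  rw [pa_pb s, Sym2.mk_isDiag_iff]
  exact hc

lemma mem_sym2_iff {s : Sym2 V} {v : V} : v ∈ s ↔ v = pa s ∨ v = pb s := by
  conv_lhs => rw [pa_pb s]
  exact Sym2.mem_iff

/-- The edge vector of an oriented edge `(a,b)`. -/
def evec (F : Type) [Field F] [DecidableEq V] (a b : V) : V → F :=
  fun v => (if a = v then 1 else 0) - (if b = v then 1 else 0)

variable {F : Type} [Field F]

lemma evec_eq_zero [DecidableEq V] {a b v : V} (ha : v ≠ a) (hb : v ≠ b) : evec F a b v = 0 := by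
  simp only [evec]
  rw [if_neg (Ne.symm ha), if_neg (Ne.symm hb), sub_zero]

lemma evec_a [DecidableEq V] {a b : V} (h : a ≠ b) : evec F a b a = 1 := by
  simp only [evec]
  rw [if_neg (Ne.symm h)]; simp

lemma evec_b [DecidableEq V] {a b : V} (h : a ≠ b) : evec F a b b = -1 := by
  simp only [evec]
  rw [if_neg h]; simp

/-! ### Determinant of the incidence matrix of a tree -/

theorem detTree [DecidableEq V] (n : ℕ) :
    ∀ (W : Finset V) (v₀ : V), v₀ ∈ W → W.card = n + 1 →
    ∀ (S : Finset (Sym2 V)), S.card = n →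
    (∀ s ∈ S, ¬ s.IsDiag ∧ pa s ∈ W ∧ pb s ∈ W) →
    (∀ w ∈ W, (SimpleGraph.fromEdgeSet (↑S : Set (Sym2 V))).Reachable v₀ w) →
    ∀ (σ : {v // v ∈ W.erase v₀} ≃ {s // s ∈ S}),
      (Matrix.det (Matrix.of fun i j : {v // v ∈ W.erase v₀} =>
          evec F (pa (σ j).1) (pb (σ j).1) i.1) = 1 ∨
        Matrix.det (Matrix.of fun i j : {v // v ∈ W.erase v₀} =>
          evec F (pa (σ j).1) (pb (σ j).1) i.1) = -1) := by
  induction n with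
  | zero =>
    intro W v₀ hv₀ hW S hS hedge hconn σ
    left
    have h0 : W.erase v₀ = ∅ := by
      rw [← Finset.card_eq_zero, Finset.card_erase_of_mem hv₀, hW]
    haveI : IsEmpty {v // v ∈ W.erase v₀} := by
      rw [h0]
      exact Finset.isEmpty_coe_sort.mpr rfl
    exact Matrix.det_isEmpty
  | succ n ih =>
    intro W v₀ hv₀ hW S hS hedge hconn σ
    set Gr := SimpleGraph.fromEdgeSet (↑S : Set (Sym2 V)) with hGrdef
    -- every vertex of W has degree ≥ 1
    have hdeg1 : ∀ v ∈ W, 1 ≤ (S.filter (fun s => v ∈ s)).card := by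
      intro v hv
      obtain ⟨w, hwW, hwv⟩ := Finset.exists_mem_ne (by rw [hW]; omega) v
      have hr : Gr.Reachable v w := (hconn v hv).symm.trans (hconn w hwW)
      obtain ⟨p⟩ := hr
      cases p with
      | nil => exact absurd rfl hwv
      | @cons _ y _ h q =>
        rw [hGrdef, SimpleGraph.fromEdgeSet_adj] at h
        refine Finset.card_pos.mpr ⟨s(v, y), Finset.mem_filter.mpr ⟨?_, ?_⟩⟩
        · exact_mod_cast h.1
        · exact Sym2.mem_mk_left v y
    -- degree sum
    have hdegsum : ∑ v ∈ W, (S.filter (fun s => v ∈ s)).card = 2 * S.card := by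
      have h1 : ∀ v ∈ W, (S.filter (fun s => v ∈ s)).card
          = ∑ s ∈ S, if v ∈ s then 1 else 0 := fun v _ => Finset.card_filter _ _
      rw [Finset.sum_congr rfl h1, Finset.sum_comm]
      have h2 : ∀ s ∈ S, (∑ v ∈ W, if v ∈ s then 1 else 0) = 2 := by
        intro s hs
        rw [← Finset.card_filter]
        have h3 : W.filter (fun v => v ∈ s) = {pa s, pb s} := by
          ext v
          simp only [Finset.mem_filter, Finset.mem_insert, Finset.mem_singleton]
          constructor
          · rintro ⟨_, hv⟩
            exact mem_sym2_iff.mp hv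
          · rintro (rfl | rfl)
            · exact ⟨(hedge s hs).2.1, mem_sym2_iff.mpr (Or.inl rfl)⟩
            · exact ⟨(hedge s hs).2.2, mem_sym2_iff.mpr (Or.inr rfl)⟩
        rw [h3]
        rw [Finset.card_insert_of_notMem (by
          rw [Finset.mem_singleton]
          exact pa_ne_pb (hedge s hs).1), Finset.card_singleton]
      rw [Finset.sum_congr rfl h2, Finset.sum_const, smul_eq_mul, hS, mul_comm]
    -- there is a leaf different from v₀
    have hleaf : ∃ u ∈ W.erase v₀, (S.filter (fun s => u ∈ s)).card = 1 := by
      by_contra hcon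
      push_neg at hcon
      have h2 : ∀ u ∈ W.erase v₀, 2 ≤ (S.filter (fun s => u ∈ s)).card := by
        intro u hu
        have ha := hdeg1 u (Finset.mem_of_mem_erase hu)
        have hb := hcon u hu
        omega
      have hsplit : ∑ v ∈ W, (S.filter (fun s => v ∈ s)).card
          = (S.filter (fun s => v₀ ∈ s)).card
            + ∑ v ∈ W.erase v₀, (S.filter (fun s => v ∈ s)).card :=
        (Finset.add_sum_erase W _ hv₀).symm
      have hge : (W.erase v₀).card * 2 ≤ ∑ v ∈ W.erase v₀, (S.filter (fun s => v ∈ s)).card := by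
        have := Finset.card_nsmul_le_sum (W.erase v₀) (fun v => (S.filter (fun s => v ∈ s)).card) 2 h2
        simpa using this
      have hcarde : (W.erase v₀).card = n + 1 := by
        rw [Finset.card_erase_of_mem hv₀, hW]
        omega
      have hv₀deg := hdeg1 v₀ hv₀
      rw [hdegsum, hS] at hsplit
      omega
    obtain ⟨u, huE, hu1⟩ := hleaf
    have huW : u ∈ W := Finset.mem_of_mem_erase huE
    have hune : u ≠ v₀ := (Finset.mem_erase.mp huE).1
    obtain ⟨e_u, he⟩ := Finset.card_eq_one.mp hu1
    have heuS : e_u ∈ S ∧ u ∈ e_u := by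
      have : e_u ∈ S.filter (fun s => u ∈ s) := by rw [he]; exact Finset.mem_singleton_self _
      exact ⟨(Finset.mem_filter.mp this).1, (Finset.mem_filter.mp this).2⟩
    have huniq : ∀ s ∈ S, u ∈ s → s = e_u := by
      intro s hs hus
      have : s ∈ S.filter (fun s => u ∈ s) := Finset.mem_filter.mpr ⟨hs, hus⟩
      rw [he, Finset.mem_singleton] at this
      exact this
    have hd := hedge e_u heuS.1
    have hab : pa e_u ≠ pb e_u := pa_ne_pb hd.1
    have hu_ab : u = pa e_u ∨ u = pb e_u := mem_sym2_iff.mp heuS.2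
    obtain ⟨x, hxu, hxeu⟩ : ∃ x, x ≠ u ∧ e_u = s(u, x) := by
      rcases hu_ab with h | h
      · exact ⟨pb e_u, by rw [h]; exact fun hc => hab hc.symm,
          by rw [h]; exact pa_pb e_u⟩
      · refine ⟨pa e_u, by rw [h]; exact hab, ?_⟩
        rw [h]
        rw [Sym2.eq_swap]
        exact pa_pb e_u
    -- new data
    set W' := W.erase u with hW'def
    set S' := S.erase e_u with hS'def
    have hv₀W' : v₀ ∈ W' := Finset.mem_erase.mpr ⟨fun hc => hune hc.symm, hv₀⟩
    have hW'card : W'.card = n + 1 := by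
      rw [hW'def, Finset.card_erase_of_mem huW, hW]
      omega
    have hS'card : S'.card = n := by
      rw [hS'def, Finset.card_erase_of_mem heuS.1, hS]
      omega
    have hnotu : ∀ s ∈ S', pa s ≠ u ∧ pb s ≠ u := by
      intro s hs
      have hsS := Finset.mem_of_mem_erase hs
      have hsne := (Finset.mem_erase.mp hs).1
      constructor
      · intro hc
        exact hsne (huniq s hsS (mem_sym2_iff.mpr (Or.inl hc.symm)))
      · intro hc
        exact hsne (huniq s hsS (mem_sym2_iff.mpr (Or.inr hc.symm)))
    have hedge' : ∀ s ∈ S', ¬ s.IsDiag ∧ pa s ∈ W' ∧ pb s ∈ W' := by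
      intro s hs
      have hsS := Finset.mem_of_mem_erase hs
      refine ⟨(hedge s hsS).1, ?_, ?_⟩
      · exact Finset.mem_erase.mpr ⟨(hnotu s hs).1, (hedge s hsS).2.1⟩
      · exact Finset.mem_erase.mpr ⟨(hnotu s hs).2, (hedge s hsS).2.2⟩
    -- connectivity surgery
    have hreach : ∀ (L : ℕ) (w : V), w ≠ u → ∀ p : Gr.Walk v₀ w, p.length ≤ L →
        (SimpleGraph.fromEdgeSet (↑S' : Set (Sym2 V))).Reachable v₀ w := by
      intro L
      induction L with
      | zero =>
        intro w _ p hp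
        have := SimpleGraph.Walk.eq_of_length_eq_zero (Nat.le_zero.mp hp)
        subst this
        exact SimpleGraph.Reachable.refl _
      | succ L ihL =>
        intro w hw p hp
        by_cases heu : e_u ∈ p.edges
        · -- walk passes through u ; shortcut it
          have husup : u ∈ p.support := by
            rw [hxeu] at heu
            exact SimpleGraph.Walk.fst_mem_support_of_mem_edges p heu
          have hlen : (p.takeUntil u husup).length + (p.dropUntil u husup).length
              = p.length := by
            have := congrArg SimpleGraph.Walk.length (p.take_spec husup)
            rwa [SimpleGraph.Walk.length_append] at this
          -- analyse the second part, a walk from u to w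
          have hq2' : ∃ r2 : Gr.Walk x w, (p.dropUntil u husup).length = r2.length + 1 := by
            cases hq2c : p.dropUntil u husup with
            | nil => exact absurd rfl hw
            | @cons _ y _ h2 r2 =>
              rw [hGrdef, SimpleGraph.fromEdgeSet_adj] at h2
              have hyS : s(u, y) ∈ S := by exact_mod_cast h2.1
              have hyx : y = x := by
                have h5 := huniq _ hyS (Sym2.mem_mk_left u y)
                rw [hxeu] at h5
                exact Sym2.congr_right.mp h5
              subst hyx
              exact ⟨r2, by rw [SimpleGraph.Walk.length_cons]⟩
          obtain ⟨r2, hr2len⟩ := hq2'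
          -- analyse the first part reversed, a walk from u to v₀
          have hq1' : ∃ r1 : Gr.Walk x v₀, (p.takeUntil u husup).length = r1.length + 1 := by
            cases hq1c : (p.takeUntil u husup).reverse with
            | nil => exact absurd rfl hune
            | @cons _ z _ h1 r1 =>
              rw [hGrdef, SimpleGraph.fromEdgeSet_adj] at h1
              have hzS : s(u, z) ∈ S := by exact_mod_cast h1.1
              have hzx : z = x := by
                have h5 := huniq _ hzS (Sym2.mem_mk_left u z)
                rw [hxeu] at h5
                exact Sym2.congr_right.mp h5
              subst hzx
              refine ⟨r1, ?_⟩
              have h6 := congrArg SimpleGraph.Walk.length hq1c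
              rw [SimpleGraph.Walk.length_reverse, SimpleGraph.Walk.length_cons] at h6
              exact h6
          obtain ⟨r1, hr1len⟩ := hq1'
          have hplen : (r1.reverse.append r2).length + 2 = p.length := by
            rw [SimpleGraph.Walk.length_append, SimpleGraph.Walk.length_reverse]
            omega
          exact ihL w hw (r1.reverse.append r2) (by omega)
        · -- transfer the walk
          have htrans : ∀ e ∈ p.edges,
              e ∈ (SimpleGraph.fromEdgeSet (↑S' : Set (Sym2 V))).edgeSet := by
            intro e hep
            have heG := p.edges_subset_edgeSet hep
            rw [hGrdef, SimpleGraph.edgeSet_fromEdgeSet] at heG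
            rw [SimpleGraph.edgeSet_fromEdgeSet]
            refine ⟨?_, heG.2⟩
            have : e ∈ S := by exact_mod_cast heG.1
            have hene : e ≠ e_u := fun hc => heu (hc ▸ hep)
            exact_mod_cast Finset.mem_erase.mpr ⟨hene, this⟩
          exact (p.transfer _ htrans).reachable
    have hconn' : ∀ w ∈ W', (SimpleGraph.fromEdgeSet (↑S' : Set (Sym2 V))).Reachable v₀ w := by
      intro w hw
      obtain ⟨p⟩ := hconn w (Finset.mem_of_mem_erase hw)
      exact hreach p.length w (Finset.mem_erase.mp hw).1 p le_rfl
    -- determinant computation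
    have hcard'' : ((W.erase v₀).erase u).card = n := by
      rw [Finset.card_erase_of_mem huE, Finset.card_erase_of_mem hv₀, hW]
      omega
    have ρ₀ : {v // v ∈ (W.erase v₀).erase u} ≃ {s // s ∈ S'} :=
      Fintype.equivOfCardEq (by rw [Fintype.card_coe, Fintype.card_coe, hcard'', hS'card])
    have hins1 : W.erase v₀ = insert u ((W.erase v₀).erase u) := (Finset.insert_erase huE).symm
    have hins2 : S = insert e_u S' := (Finset.insert_erase heuS.1).symm
    let E1 : {v // v ∈ W.erase v₀} ≃ Option {v // v ∈ (W.erase v₀).erase u} :=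
      (Equiv.subtypeEquivRight (fun v => by rw [← hins1])).trans
        (Finset.subtypeInsertEquivOption (Finset.notMem_erase u _))
    let E2 : {s // s ∈ S} ≃ Option {s // s ∈ S'} :=
      (Equiv.subtypeEquivRight (fun s => by rw [← hins2])).trans
        (Finset.subtypeInsertEquivOption (Finset.notMem_erase e_u S))
    let σstar : {v // v ∈ W.erase v₀} ≃ {s // s ∈ S} :=
      E1.trans ((Equiv.optionCongr ρ₀).trans E2.symm)
    -- values of the option equivs
    have hE1some : ∀ i : {v // v ∈ (W.erase v₀).erase u}, (E1.symm (some i)).1 = i.1 := by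
      intro i; rfl
    have hE1none : (E1.symm (none : Option {v // v ∈ (W.erase v₀).erase u})).1 = u := by rfl
    have hE2some : ∀ t : {s // s ∈ S'}, (E2.symm (some t)).1 = t.1 := by
      intro t; rfl
    have hE2none : (E2.symm (none : Option {s // s ∈ S'})).1 = e_u := by rfl
    -- the matrix for σstar, in block form
    set Mstar : Matrix {v // v ∈ W.erase v₀} {v // v ∈ W.erase v₀} F :=
      Matrix.of (fun i j => evec F (pa (σstar j).1) (pb (σstar j).1) i.1) with hMstar
    set A : Matrix {v // v ∈ (W.erase v₀).erase u} {v // v ∈ (W.erase v₀).erase u} F :=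
      Matrix.of (fun i j => evec F (pa (ρ₀ j).1) (pb (ρ₀ j).1) i.1) with hA
    set B : Matrix {v // v ∈ (W.erase v₀).erase u} Unit F :=
      Matrix.of (fun i _ => evec F (pa e_u) (pb e_u) i.1) with hB
    set D : Matrix Unit Unit F :=
      Matrix.of (fun _ _ => evec F (pa e_u) (pb e_u) u) with hD
    let eS : Sum {v // v ∈ (W.erase v₀).erase u} Unit ≃ {v // v ∈ W.erase v₀} :=
      (Equiv.optionEquivSumPUnit _).symm.trans E1.symm
    have hcol_some : ∀ j'' : {v // v ∈ (W.erase v₀).erase u},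
        (σstar (E1.symm (some j''))).1 = (ρ₀ j'').1 := by
      intro j''
      show (E2.symm ((Equiv.optionCongr ρ₀) (E1 (E1.symm (some j''))))).1 = _
      rw [Equiv.apply_symm_apply]
      exact hE2some (ρ₀ j'')
    have hcol_none : (σstar (E1.symm (none : Option {v // v ∈ (W.erase v₀).erase u}))).1
        = e_u := by
      show (E2.symm ((Equiv.optionCongr ρ₀)
        (E1 (E1.symm (none : Option {v // v ∈ (W.erase v₀).erase u}))))).1 = _
      rw [Equiv.apply_symm_apply]
      exact hE2none
    have hblocks : Mstar.submatrix eS eS = Matrix.fromBlocks A B 0 D := by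
      ext i j
      cases i with
      | inl i' =>
        cases j with
        | inl j' =>
          show Mstar (E1.symm (some i')) (E1.symm (some j')) = A i' j'
          show evec F (pa (σstar (E1.symm (some j'))).1) (pb (σstar (E1.symm (some j'))).1)
            (E1.symm (some i')).1 = _
          rw [hcol_some j', hE1some i']
          rfl
        | inr _ =>
          show Mstar (E1.symm (some i')) (E1.symm none) = B i' Unit.unit
          show evec F (pa (σstar (E1.symm none)).1) (pb (σstar (E1.symm none)).1)
            (E1.symm (some i')).1 = _
          rw [hcol_none, hE1some i']
          rfl
      | inr _ =>
        cases j with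
        | inl j' =>
          show Mstar (E1.symm none) (E1.symm (some j')) = 0
          show evec F (pa (σstar (E1.symm (some j'))).1) (pb (σstar (E1.symm (some j'))).1)
            (E1.symm none).1 = 0
          rw [hcol_some j', hE1none]
          have hmem : ((ρ₀ j') : Sym2 V) ∈ S' := (ρ₀ j').2
          exact evec_eq_zero (Ne.symm (hnotu _ hmem).1) (Ne.symm (hnotu _ hmem).2)
        | inr _ =>
          show Mstar (E1.symm none) (E1.symm none) = D Unit.unit Unit.unit
          show evec F (pa (σstar (E1.symm none)).1) (pb (σstar (E1.symm none)).1)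
            (E1.symm none).1 = _
          rw [hcol_none, hE1none]
          rfl
    -- determinant of Mstar
    have hMstar_det : Mstar.det = A.det * D.det := by
      rw [← Matrix.det_submatrix_equiv_self eS Mstar, hblocks,
        Matrix.det_fromBlocks_zero₂₁]
    -- D
    have hDdet : D.det = 1 ∨ D.det = -1 := by
      rw [hD, Matrix.det_unique]
      rcases hu_ab with h | h
      · left; show evec F (pa e_u) (pb e_u) u = 1; rw [h]; exact evec_a hab
      · right; show evec F (pa e_u) (pb e_u) u = -1; rw [h]; exact evec_b hab
    -- A via the induction hypothesis
    have hcomm : (W.erase v₀).erase u = W'.erase v₀ := by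
      rw [hW'def]
      ext v
      simp only [Finset.mem_erase]
      tauto
    let ε : {v // v ∈ (W.erase v₀).erase u} ≃ {v // v ∈ W'.erase v₀} :=
      Equiv.subtypeEquivRight (fun v => by rw [hcomm])
    have hAdet : A.det = 1 ∨ A.det = -1 := by
      have hIH := ih W' v₀ hv₀W' hW'card S' hS'card hedge' hconn' (ε.symm.trans ρ₀)
      have hAeq : A = (Matrix.of (fun i j : {v // v ∈ W'.erase v₀} =>
          evec F (pa ((ε.symm.trans ρ₀) j).1) (pb ((ε.symm.trans ρ₀) j).1) i.1)).submatrix ε ε := by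
        funext i j
        simp only [Matrix.submatrix_apply, Matrix.of_apply, Equiv.trans_apply,
          Equiv.symm_apply_apply, hA]
        rfl
      rw [hAeq, Matrix.det_submatrix_equiv_self]
      exact hIH
    -- relate σ and σstar
    let π : Equiv.Perm {v // v ∈ W.erase v₀} := σ.trans σstar.symm
    have hMeq : (Matrix.of fun i j : {v // v ∈ W.erase v₀} =>
        evec F (pa (σ j).1) (pb (σ j).1) i.1) = Mstar.submatrix id π := by
      funext i j
      simp only [Matrix.submatrix_apply, Matrix.of_apply, hMstar, id]
      have : σstar (π j) = σ j := by
        show σstar (σstar.symm (σ j)) = σ j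
        exact Equiv.apply_symm_apply _ _
      rw [this]
    rw [hMeq, Matrix.det_permute' π Mstar, hMstar_det]
    rcases Int.units_eq_one_or (Equiv.Perm.sign π) with hs | hs <;>
      rw [hs] <;> rcases hAdet with h1 | h1 <;> rcases hDdet with h2 | h2 <;>
      rw [h1, h2] <;> norm_num

theorem detNotConn [DecidableEq V] [Fintype V] (v₀ : V) (S : Finset (Sym2 V))
    (hdiag : ∀ s ∈ S, ¬ s.IsDiag)
    (hnc : ¬ (SimpleGraph.fromEdgeSet (↑S : Set (Sym2 V))).Connected)
    (σ : {v // v ∈ (Finset.univ : Finset V).erase v₀} ≃ {s // s ∈ S}) :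
    Matrix.det (Matrix.of fun i j : {v // v ∈ (Finset.univ : Finset V).erase v₀} =>
      evec F (pa (σ j).1) (pb (σ j).1) i.1) = 0 := by
  classical
  set Gr := SimpleGraph.fromEdgeSet (↑S : Set (Sym2 V)) with hGr
  haveI : Nonempty V := ⟨v₀⟩
  have hpre : ¬ Gr.Preconnected := fun hp => hnc ⟨hp⟩
  have hy : ∃ y, ¬ Gr.Reachable v₀ y := by
    by_contra h
    push_neg at h
    exact hpre fun x y => ((h x).symm.trans (h y))
  obtain ⟨y, hy⟩ := hy
  refine Matrix.exists_vecMul_eq_zero_iff.mp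
    ⟨fun i => if Gr.Reachable y i.1 then (1 : F) else 0, ?_, ?_⟩
  · intro hzero
    have hymem : y ∈ (Finset.univ : Finset V).erase v₀ := by
      rw [Finset.mem_erase]
      exact ⟨fun hc => hy (hc ▸ SimpleGraph.Reachable.refl _), Finset.mem_univ _⟩
    have := congrFun hzero ⟨y, hymem⟩
    simp only [if_pos (SimpleGraph.Reachable.refl y)] at this
    exact one_ne_zero this
  · funext j
    show ∑ i, _ = _
    rw [show (0 : {v // v ∈ (Finset.univ : Finset V).erase v₀} → F) j = 0 from rfl]
    have hstep : ∀ i : {v // v ∈ (Finset.univ : Finset V).erase v₀},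
        (fun i : {v // v ∈ (Finset.univ : Finset V).erase v₀} =>
          if Gr.Reachable y i.1 then (1 : F) else 0) i *
          Matrix.of (fun i j : {v // v ∈ (Finset.univ : Finset V).erase v₀} =>
            evec F (pa (σ j).1) (pb (σ j).1) i.1) i j
        = (fun v : V => if Gr.Reachable y v then evec F (pa (σ j).1) (pb (σ j).1) v else 0) i.1 := by
      intro i
      by_cases h : Gr.Reachable y i.1 <;> simp [h]
    simp only [Matrix.vecMul, dotProduct]
    rw [Finset.sum_congr rfl fun i _ => hstep i,
      Finset.sum_coe_sort ((Finset.univ : Finset V).erase v₀)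
        (fun v : V => if Gr.Reachable y v then evec F (pa (σ j).1) (pb (σ j).1) v else 0)]
    rw [Finset.sum_erase _ (by rw [if_neg (fun hc => hy hc.symm)])]
    rw [← Finset.sum_filter]
    set a := pa (σ j).1
    set b := pb (σ j).1
    have hab : a ≠ b := pa_ne_pb (hdiag _ (σ j).2)
    have hadj : Gr.Adj a b := by
      rw [hGr, SimpleGraph.fromEdgeSet_adj]
      refine ⟨?_, hab⟩
      have : (σ j).1 = s(a, b) := pa_pb (σ j).1
      rw [← this]
      exact_mod_cast (σ j).2
    have hsplit : ∀ v ∈ Finset.univ.filter (fun v => Gr.Reachable y v),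
        evec F a b v = (if a = v then (1:F) else 0) - (if b = v then (1:F) else 0) := by
      intro v _; rfl
    rw [Finset.sum_congr rfl hsplit, Finset.sum_sub_distrib,
      Finset.sum_ite_eq _ a (fun _ => (1:F)), Finset.sum_ite_eq _ b (fun _ => (1:F))]
    by_cases hR : Gr.Reachable y a
    · rw [if_pos (by simp [hR]), if_pos (by simp [hR.trans hadj.reachable])]
      ring
    · rw [if_neg (by simp [hR]), if_neg
        (by simp only [Finset.mem_filter, Finset.mem_univ, true_and];
            exact fun hc => hR (hc.trans hadj.symm.reachable)), sub_zero]

/-! ### Cauchy–Binet style expansion -/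

theorem det_sum_outer {ι E : Type} [Fintype ι] [DecidableEq ι] [Fintype E] [DecidableEq E]
    (γ : E → F) (c : E → ι → F) (d : Finset E → F)
    (hd : ∀ (S : Finset E) (σ : ι ≃ {e // e ∈ S}),
      d S = (Matrix.det (Matrix.of fun i j => c ↑(σ j) i)) ^ 2) :
    Matrix.det (Matrix.of fun i j => ∑ e : E, γ e * c e i * c e j) =
      ∑ S ∈ Finset.univ.powersetCard (Fintype.card ι), (∏ e ∈ S, γ e) * d S := by
  classical
  have h1 : Matrix.det (Matrix.of fun i j => ∑ e : E, γ e * c e i * c e j)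
      = ∑ r : ι → E, (∏ i, γ (r i) * c (r i) i) *
          Matrix.det (Matrix.of fun i j => c (r i) j) := by
    have hM : (Matrix.of fun i j => ∑ e : E, γ e * c e i * c e j)
        = fun i : ι => ∑ e ∈ (Finset.univ : Finset E), (γ e * c e i) • c e := by
      funext i j
      simp [Finset.sum_apply, mul_assoc]
    have e1 : Matrix.det (Matrix.of fun i j => ∑ e : E, γ e * c e i * c e j)
        = Matrix.detRowAlternating
            (fun i : ι => ∑ e ∈ (Finset.univ : Finset E), (γ e * c e i) • c e) :=
      congrArg (fun X => Matrix.detRowAlternating X) hM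
    rw [e1]
    rw [show (Matrix.detRowAlternating
        (fun i : ι => ∑ e ∈ (Finset.univ : Finset E), (γ e * c e i) • c e) : F)
      = ∑ r ∈ Fintype.piFinset (fun _ : ι => (Finset.univ : Finset E)),
          Matrix.detRowAlternating (fun i => (γ (r i) * c (r i) i) • c (r i)) from
      (Matrix.detRowAlternating (R := F) (n := ι)).toMultilinearMap.map_sum_finset
        (fun i e => (γ e * c e i) • c e) (fun _ => (Finset.univ : Finset E))]
    rw [Fintype.piFinset_univ]
    refine Finset.sum_congr rfl fun r _ => ?_
    rw [show (Matrix.detRowAlternating (fun i => (γ (r i) * c (r i) i) • c (r i)) : F)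
      = (∏ i, γ (r i) * c (r i) i) • Matrix.detRowAlternating (fun i => c (r i)) from
      (Matrix.detRowAlternating (R := F) (n := ι)).toMultilinearMap.map_smul_univ
        (fun i => γ (r i) * c (r i) i) (fun i => c (r i))]
    rw [smul_eq_mul]
    rfl
  rw [h1]
  rw [← Finset.sum_filter_add_sum_filter_not Finset.univ (fun r : ι → E => Function.Injective r)]
  have h0 : ∑ r ∈ Finset.univ.filter (fun r : ι → E => ¬ Function.Injective r),
      (∏ i, γ (r i) * c (r i) i) * Matrix.det (Matrix.of fun i j => c (r i) j) = 0 := by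
    refine Finset.sum_eq_zero fun r hr => ?_
    rw [Finset.mem_filter] at hr
    obtain ⟨i1, i2, heq, hne⟩ := Function.not_injective_iff.mp hr.2
    have hz : Matrix.det (Matrix.of fun i j => c (r i) j) = 0 :=
      AlternatingMap.map_eq_zero_of_eq Matrix.detRowAlternating
        (fun i => c (r i)) (by show c (r i1) = c (r i2); rw [heq]) hne
    rw [hz, mul_zero]
  rw [h0, add_zero]
  rw [← Finset.sum_fiberwise_of_maps_to
    (g := fun r : ι → E => Finset.image r Finset.univ)
    (t := Finset.univ.powersetCard (Fintype.card ι))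
    (fun r hr => by
      rw [Finset.mem_filter] at hr
      rw [Finset.mem_powersetCard]
      exact ⟨Finset.subset_univ _, by
        rw [Finset.card_image_of_injective _ hr.2, Finset.card_univ]⟩)]
  refine Finset.sum_congr rfl fun S hS => ?_
  have hScard : S.card = Fintype.card ι := (Finset.mem_powersetCard.mp hS).2
  have σS : ι ≃ {e // e ∈ S} :=
    Fintype.equivOfCardEq (by rw [Fintype.card_coe, hScard])
  set N : Matrix ι ι F := Matrix.of fun i j => c ↑(σS j) i with hN
  have key : ∀ π : Equiv.Perm ι,
      (∏ x, γ ((σS (π x) : {e // e ∈ S}) : E) * c ((σS (π x) : {e // e ∈ S}) : E) x) *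
        Matrix.det (Matrix.of fun x j => c ((σS (π x) : {e // e ∈ S}) : E) j)
      = (∏ e ∈ S, γ e) * (((Equiv.Perm.sign π : ℤ) : F) * ((∏ x, N x (π x)) * N.transpose.det)) := by
    intro π
    have hprod : (∏ x, γ ((σS (π x) : {e // e ∈ S}) : E)) = ∏ e ∈ S, γ e :=
      (Equiv.prod_comp (π.trans σS) (fun s : {e // e ∈ S} => γ ↑s)).trans
        (Finset.prod_coe_sort S γ)
    have hdet : Matrix.det (Matrix.of fun x j => c ((σS (π x) : {e // e ∈ S}) : E) j)
        = ((Equiv.Perm.sign π : ℤ) : F) * N.transpose.det := by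
      have hsub : (Matrix.of fun x j => c ((σS (π x) : {e // e ∈ S}) : E) j)
          = N.transpose.submatrix π id := by
        funext x j
        simp only [hN, Matrix.submatrix_apply, Matrix.transpose_apply, Matrix.of_apply, id]
      rw [hsub, Matrix.det_permute]
    have h4 : (∏ x, c ((σS (π x) : {e // e ∈ S}) : E) x) = ∏ x, N x (π x) :=
      Finset.prod_congr rfl fun x _ => rfl
    rw [Finset.prod_mul_distrib, hprod, hdet, h4]
    ring
  have hperm : ∑ r ∈ (Finset.univ.filter (fun r : ι → E => Function.Injective r)).filter
        (fun r => Finset.image r Finset.univ = S),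
      (∏ i, γ (r i) * c (r i) i) * Matrix.det (Matrix.of fun i j => c (r i) j)
      = ∑ π : Equiv.Perm ι,
        (∏ x, γ ((σS (π x) : {e // e ∈ S}) : E) * c ((σS (π x) : {e // e ∈ S}) : E) x) *
          Matrix.det (Matrix.of fun x j => c ((σS (π x) : {e // e ∈ S}) : E) j) := by
    refine (Finset.sum_bij (fun (π : Equiv.Perm ι) _ => fun x => ((σS (π x) : {e // e ∈ S}) : E))
      ?_ ?_ ?_ ?_).symm
    · intro π _
      rw [Finset.mem_filter, Finset.mem_filter]
      have hinj : Function.Injective (fun x => ((σS (π x) : {e // e ∈ S}) : E)) :=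
        Subtype.val_injective.comp (σS.injective.comp π.injective)
      refine ⟨⟨Finset.mem_univ _, hinj⟩, ?_⟩
      apply Finset.eq_of_subset_of_card_le
      · intro e he
        obtain ⟨x, _, rfl⟩ := Finset.mem_image.mp he
        exact (σS (π x)).2
      · rw [Finset.card_image_of_injective _ hinj, Finset.card_univ, hScard]
    · intro π1 _ π2 _ h
      ext x
      have := congrFun h x
      exact congrArg π1 rfl ▸ σS.injective (Subtype.val_injective this) ▸ rfl
    · intro r hr
      rw [Finset.mem_filter, Finset.mem_filter] at hr
      obtain ⟨⟨_, hinj⟩, him⟩ := hr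
      have hmem : ∀ x, r x ∈ S := fun x => him ▸ Finset.mem_image_of_mem r (Finset.mem_univ x)
      have hbij : Function.Bijective (fun x => σS.symm ⟨r x, hmem x⟩) := by
        apply Finite.injective_iff_bijective.mp
        intro x y hxy
        apply hinj
        have := σS.symm.injective hxy
        exact congrArg Subtype.val this
      refine ⟨Equiv.ofBijective _ hbij, Finset.mem_univ _, ?_⟩
      funext x
      simp [Equiv.ofBijective_apply]
    · intro π _
      rfl
  rw [hperm, Finset.sum_congr rfl fun π _ => key π, ← Finset.mul_sum]
  have hdetsum : ∑ π : Equiv.Perm ι,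
      ((Equiv.Perm.sign π : ℤ) : F) * ((∏ x, N x (π x)) * N.transpose.det)
      = N.transpose.det * N.transpose.det := by
    have e2 : ∀ π : Equiv.Perm ι,
        ((Equiv.Perm.sign π : ℤ) : F) * ((∏ x, N x (π x)) * N.transpose.det)
        = (((Equiv.Perm.sign π : ℤ) : F) * ∏ x, N.transpose (π x) x) * N.transpose.det := by
      intro π
      have h3 : (∏ x, N x (π x)) = ∏ x, N.transpose (π x) x :=
        Finset.prod_congr rfl fun x _ => rfl
      rw [h3]; ring
    rw [Finset.sum_congr rfl fun π _ => e2 π, ← Finset.sum_mul, ← Matrix.det_apply']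
  rw [hdetsum, hd S σS, Matrix.det_transpose]
  rw [pow_two]

/-! ### Pencil lemma -/

lemma vecMulVec_mulVec' {ι : Type} [Fintype ι] (u v : ι → F) :
    (Matrix.vecMulVec u u) *ᵥ v = (u ⬝ᵥ v) • u := by
  ext i
  simp only [Matrix.mulVec, dotProduct, Matrix.vecMulVec_apply, Pi.smul_apply,
    smul_eq_mul, Finset.sum_mul]
  exact Finset.sum_congr rfl fun j _ => by ring

theorem pencil {ι : Type} [Fintype ι] [DecidableEq ι] (M : Matrix ι ι F) (hM : M.IsSymm)
    (u : ι → F) :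
    (M.det = 0 ∧ (M + Matrix.vecMulVec u u).det = 0) ↔
      ∃ v, v ≠ 0 ∧ M *ᵥ v = 0 ∧ u ⬝ᵥ v = 0 := by
  constructor
  · rintro ⟨h0, h1⟩
    obtain ⟨w, hw0, hw⟩ := Matrix.exists_mulVec_eq_zero_iff.mpr h0
    by_cases hbw : u ⬝ᵥ w = 0
    · exact ⟨w, hw0, hw, hbw⟩
    obtain ⟨z, hz0, hz⟩ := Matrix.exists_mulVec_eq_zero_iff.mpr h1
    have hz' : M *ᵥ z + (u ⬝ᵥ z) • u = 0 := by
      rw [← hz, Matrix.add_mulVec, vecMulVec_mulVec']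
    by_cases hbz : u ⬝ᵥ z = 0
    · refine ⟨z, hz0, ?_, hbz⟩
      rwa [hbz, zero_smul, add_zero] at hz'
    exfalso
    have hurange : M *ᵥ (-(u ⬝ᵥ z)⁻¹ • z) = u := by
      rw [Matrix.mulVec_smul]
      have h2 : M *ᵥ z = -((u ⬝ᵥ z) • u) := eq_neg_of_add_eq_zero_left hz'
      rw [h2]
      simp [smul_smul, inv_mul_cancel₀ hbz]
    apply hbw
    have hwM : w ᵥ* M = 0 := by
      have := Matrix.mulVec_transpose M w
      rw [hM] at this
      rw [← this, hw]
    calc u ⬝ᵥ w = w ⬝ᵥ u := dotProduct_comm u w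
      _ = w ⬝ᵥ (M *ᵥ (-(u ⬝ᵥ z)⁻¹ • z)) := by rw [hurange]
      _ = (w ᵥ* M) ⬝ᵥ (-(u ⬝ᵥ z)⁻¹ • z) := Matrix.dotProduct_mulVec _ _ _
      _ = 0 := by rw [hwM, zero_dotProduct]
  · rintro ⟨v, hv0, hvM, hvu⟩
    constructor
    · exact Matrix.exists_mulVec_eq_zero_iff.mp ⟨v, hv0, hvM⟩
    · refine Matrix.exists_mulVec_eq_zero_iff.mp ⟨v, hv0, ?_⟩
      rw [Matrix.add_mulVec, hvM, zero_add, vecMulVec_mulVec', hvu, zero_smul]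

/-! ### Cardinality lemmas -/

theorem card_submodule_cast [Fintype F] (q : ℕ) (hq : q = Fintype.card F) {M : Type}
    [AddCommGroup M] [Module F M] [Fintype M] (K : Submodule F M) (hK : K ≠ ⊥) :
    ((Nat.card K : ZMod q) = 0) := by
  haveI : Fintype K := Fintype.ofFinite K
  haveI : Nontrivial K := Submodule.nontrivial_iff_ne_bot.mpr hK
  have h1 : 0 < Module.finrank F ↥K := Module.finrank_pos
  rw [Nat.card_eq_fintype_card, Module.card_eq_pow_finrank (K := F) (V := ↥K), ← hq]
  obtain ⟨k, hk⟩ := Nat.exists_eq_add_of_lt h1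
  rw [hk]
  push_cast
  rw [ZMod.natCast_self]
  ring

/-! ### Polynomial evaluation lemmas -/

section Poly

variable {E : Type} [Fintype E] [DecidableEq E]

lemma pderiv_prod_X (e₁ : E) (T : Finset E) :
    pderiv e₁ (∏ e ∈ T, (X e : MvPolynomial E F)) =
      if e₁ ∈ T then ∏ e ∈ T.erase e₁, (X e : MvPolynomial E F) else 0 := by
  induction T using Finset.induction_on with
  | empty => simp
  | @insert a T' haT' ih =>
    rw [Finset.prod_insert haT', pderiv_mul, ih, pderiv_X]
    by_cases h : e₁ = a
    · subst h
      rw [if_neg haT', if_pos (Finset.mem_insert_self e₁ T'), Finset.erase_insert haT',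
        Pi.single_eq_same]
      ring
    · rw [Pi.single_eq_of_ne (Ne.symm h)]
      by_cases h2 : e₁ ∈ T'
      · rw [if_pos h2, if_pos (Finset.mem_insert_of_mem h2),
          Finset.erase_insert_of_ne (Ne.symm h),
          Finset.prod_insert (fun hc => haT' (Finset.mem_of_mem_erase hc))]
        ring
      · rw [if_neg h2, if_neg (by simp [h, h2])]
        ring

lemma setZero_prod_X (e₁ : E) (T : Finset E) :
    setZero e₁ (∏ e ∈ T, (X e : MvPolynomial E F)) =
      if e₁ ∈ T then 0 else ∏ e ∈ T, (X e : MvPolynomial E F) := by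
  classical
  simp only [setZero, map_prod, aeval_X]
  by_cases h : e₁ ∈ T
  · rw [if_pos h]
    exact Finset.prod_eq_zero h (by simp)
  · rw [if_neg h]
    refine Finset.prod_congr rfl fun e he => ?_
    rw [if_neg (by rintro rfl; exact h he)]

end Poly

section Graph

variable [Fintype V] (G : SimpleGraph V) [Fintype G.edgeSet]

open scoped Classical in
lemma eval_dualPoly (γ : G.edgeSet → F) :
    eval γ (dualPoly F G) =
      ∑ T ∈ Finset.univ.filter (fun T : Finset G.edgeSet => G.IsSpanningTree T),
        ∏ e ∈ T, γ e := by
  simp only [dualPoly, map_sum, map_prod, eval_X]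

open scoped Classical in
lemma eval_pderiv_dualPoly (e₁ : G.edgeSet) (α : G.edgeSet → F) :
    eval α (pderiv e₁ (dualPoly F G)) =
      ∑ T ∈ Finset.univ.filter (fun T : Finset G.edgeSet => G.IsSpanningTree T),
        (if e₁ ∈ T then ∏ e ∈ T.erase e₁, α e else 0) := by
  rw [dualPoly, map_sum, map_sum]
  refine Finset.sum_congr rfl fun T _ => ?_
  rw [pderiv_prod_X, apply_ite (eval α), map_prod, map_zero]
  simp only [eval_X]

open scoped Classical in
lemma eval_setZero_dualPoly (e₁ : G.edgeSet) (α : G.edgeSet → F) :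
    eval α (setZero e₁ (dualPoly F G)) =
      ∑ T ∈ Finset.univ.filter (fun T : Finset G.edgeSet => G.IsSpanningTree T),
        (if e₁ ∈ T then 0 else ∏ e ∈ T, α e) := by
  rw [dualPoly]
  rw [show (setZero e₁ (∑ T ∈ Finset.univ.filter
      (fun T : Finset G.edgeSet => G.IsSpanningTree T), ∏ e ∈ T, (X e : MvPolynomial G.edgeSet F)))
    = ∑ T ∈ Finset.univ.filter (fun T : Finset G.edgeSet => G.IsSpanningTree T),
      setZero e₁ (∏ e ∈ T, (X e : MvPolynomial G.edgeSet F)) from map_sum (aeval _) _ _]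
  rw [map_sum]
  refine Finset.sum_congr rfl fun T _ => ?_
  rw [setZero_prod_X, apply_ite (eval α), map_prod, map_zero]
  simp only [eval_X]

open scoped Classical in
lemma eval_update_dualPoly (e₁ : G.edgeSet) (α : G.edgeSet → F) (t : F) :
    eval (Function.update α e₁ t) (dualPoly F G) =
      t * eval α (pderiv e₁ (dualPoly F G)) + eval α (setZero e₁ (dualPoly F G)) := by
  rw [eval_dualPoly, eval_pderiv_dualPoly, eval_setZero_dualPoly, Finset.mul_sum,
    ← Finset.sum_add_distrib]
  refine Finset.sum_congr rfl fun T _ => ?_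
  by_cases h : e₁ ∈ T
  · rw [if_pos h, if_pos h, add_zero, ← Finset.mul_prod_erase _ _ h, Function.update_self]
    congr 1
    exact Finset.prod_congr rfl fun e he =>
      Function.update_of_ne (Finset.ne_of_mem_erase he) _ _
  · rw [if_neg h, if_neg h, mul_zero, zero_add]
    exact Finset.prod_congr rfl fun e he =>
      Function.update_of_ne (by rintro rfl; exact h he) _ _

variable [DecidableEq V] (v₀ : V)

/-- Reduced incidence column of an edge. -/
noncomputable def cvec (e : G.edgeSet) : {v // v ∈ (Finset.univ : Finset V).erase v₀} → F :=
  fun i => evec F (pa e.1) (pb e.1) i.1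

/-- Reduced weighted Laplacian. -/
noncomputable def Lmat (γ : G.edgeSet → F) :
    Matrix {v // v ∈ (Finset.univ : Finset V).erase v₀}
      {v // v ∈ (Finset.univ : Finset V).erase v₀} F :=
  Matrix.of fun i j => ∑ e : G.edgeSet, γ e * cvec G v₀ e i * cvec G v₀ e j

lemma card_iota : Fintype.card {v // v ∈ (Finset.univ : Finset V).erase v₀} =
    Fintype.card V - 1 := by
  rw [Fintype.card_coe, Finset.card_erase_of_mem (Finset.mem_univ v₀), Finset.card_univ]

open scoped Classical in
/-- Weighted matrix-tree theorem. -/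
theorem matrixTree (hG : G.Connected) (γ : G.edgeSet → F) :
    (Lmat G v₀ γ).det = eval γ (dualPoly F G) := by
  classical
  haveI : Nonempty V := hG.nonempty
  rw [eval_dualPoly]
  have hcardV : 1 ≤ Fintype.card V := Fintype.card_pos
  have hn : Fintype.card {v // v ∈ (Finset.univ : Finset V).erase v₀}
      = Fintype.card V - 1 := card_iota v₀
  have hd : ∀ (S : Finset G.edgeSet) (σ : {v // v ∈ (Finset.univ : Finset V).erase v₀} ≃
      {e // e ∈ S}), (if G.IsSpanningTree S then (1:F) else 0) = (Matrix.det (Matrix.of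
        fun i j : {v // v ∈ (Finset.univ : Finset V).erase v₀} => cvec G v₀ ↑(σ j) i)) ^ 2 := by
    intro S σ
    have hcardS : S.card = Fintype.card V - 1 := by
      rw [← Fintype.card_coe S, ← Fintype.card_congr σ, hn]
    set S2 : Finset (Sym2 V) := S.image Subtype.val with hS2
    have hS2coe : (↑S2 : Set (Sym2 V)) = Subtype.val '' (↑S : Set G.edgeSet) := by
      rw [hS2, Finset.coe_image]
    have hS2card : S2.card = S.card := Finset.card_image_of_injective _ Subtype.val_injective
    have hbij : Function.Bijective (fun x : {s // s ∈ S} =>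
        (⟨x.1.1, Finset.mem_image_of_mem _ x.2⟩ : {s // s ∈ S2})) := by
      constructor
      · intro x y h
        simp only [Subtype.mk.injEq] at h
        exact Subtype.ext (Subtype.val_injective h)
      · rintro ⟨y, hy⟩
        obtain ⟨e, heS, heq⟩ := Finset.mem_image.mp hy
        exact ⟨⟨e, heS⟩, Subtype.ext heq⟩
    let τ : {s // s ∈ S} ≃ {s // s ∈ S2} := Equiv.ofBijective _ hbij
    have hdiag : ∀ s ∈ S2, ¬ s.IsDiag := by
      intro s hs
      obtain ⟨e, _, rfl⟩ := Finset.mem_image.mp hs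
      exact G.not_isDiag_of_mem_edgeSet e.2
    have hMeq : (Matrix.of fun i j : {v // v ∈ (Finset.univ : Finset V).erase v₀} =>
          cvec G v₀ ↑(σ j) i)
        = (Matrix.of fun i j : {v // v ∈ (Finset.univ : Finset V).erase v₀} =>
          evec F (pa ((σ.trans τ) j).1) (pb ((σ.trans τ) j).1) i.1) := rfl
    by_cases hT : G.IsSpanningTree S
    · have hdet := detTree (F := F) (Fintype.card V - 1) Finset.univ v₀ (Finset.mem_univ v₀)
        (by rw [Finset.card_univ]; omega) S2 (by rw [hS2card, hcardS])
        (fun s hs => ⟨hdiag s hs, Finset.mem_univ _, Finset.mem_univ _⟩)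
        (fun w _ => by
          have := hT.2.preconnected v₀ w
          rwa [← hS2coe] at this)
        (σ.trans τ)
      simp only [if_pos hT]
      rw [hMeq]
      rcases hdet with h | h <;> rw [h] <;> ring
    · have hcc : ¬ (SimpleGraph.fromEdgeSet (↑S2 : Set (Sym2 V))).Connected := by
        rw [hS2coe]
        exact fun hc => hT ⟨hcardS, hc⟩
      have hdet := detNotConn (F := F) v₀ S2 hdiag hcc (σ.trans τ)
      simp only [if_neg hT]
      rw [hMeq, hdet]
      ring
  have hmain := det_sum_outer γ (cvec G v₀)
    (fun T => if G.IsSpanningTree T then (1:F) else 0) hd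
  rw [show Lmat G v₀ γ = Matrix.of fun i j => ∑ e, γ e * cvec G v₀ e i * cvec G v₀ e j from rfl,
    hmain]
  have hstep : ∑ S ∈ Finset.univ.powersetCard
        (Fintype.card {v // v ∈ (Finset.univ : Finset V).erase v₀}),
        (∏ e ∈ S, γ e) * (if G.IsSpanningTree S then (1:F) else 0)
      = ∑ S ∈ Finset.univ.powersetCard
        (Fintype.card {v // v ∈ (Finset.univ : Finset V).erase v₀}),
        (if G.IsSpanningTree S then (∏ e ∈ S, γ e) else 0) :=
    Finset.sum_congr rfl fun S _ => by simp only [mul_ite, mul_one, mul_zero]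
  rw [hstep, ← Finset.sum_filter]
  congr 1
  ext S
  simp only [Finset.mem_filter, Finset.mem_powersetCard, Finset.mem_univ, true_and, and_iff_right_iff_imp]
  intro hT
  exact ⟨Finset.subset_univ _, by rw [hT.1, hn]⟩

lemma Lmat_isSymm (γ : G.edgeSet → F) : (Lmat G v₀ γ).IsSymm := by
  unfold Matrix.IsSymm
  ext i j
  simp only [Lmat, Matrix.transpose_apply, Matrix.of_apply]
  exact Finset.sum_congr rfl fun e _ => by ring

lemma Lmat_update (e₁ : G.edgeSet) (α : G.edgeSet → F) (hα : α e₁ = 0) :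
    Lmat G v₀ (Function.update α e₁ (1 : F)) =
      Lmat G v₀ α + Matrix.vecMulVec (cvec G v₀ e₁) (cvec G v₀ e₁) := by
  classical
  ext i j
  simp only [Lmat, Matrix.of_apply, Matrix.add_apply, Matrix.vecMulVec_apply]
  rw [← Finset.add_sum_erase _ _ (Finset.mem_univ e₁), ← Finset.add_sum_erase _ _ (Finset.mem_univ e₁),
    Function.update_self, hα]
  have hsum : ∑ e ∈ Finset.univ.erase e₁, Function.update α e₁ 1 e * cvec G v₀ e i * cvec G v₀ e j
      = ∑ e ∈ Finset.univ.erase e₁, α e * cvec G v₀ e i * cvec G v₀ e j := by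
    refine Finset.sum_congr rfl fun e he => ?_
    rw [Function.update_of_ne (Finset.ne_of_mem_erase he)]
  rw [hsum]
  ring

end Graph

end Stmt8

theorem deriv_and_deletion_point_count_div_q [Fintype V] (G : SimpleGraph V)
    [Fintype G.edgeSet] (hG : G.Connected)
    (hloop : Fintype.card V + 1 ≤ Fintype.card G.edgeSet) (e₁ : G.edgeSet)
    (F : Type) [Field F] [Fintype F] :
    Fintype.card F ∣ Nat.card {α : G.edgeSet → F //
      α e₁ = 0 ∧ eval α (pderiv e₁ (dualPoly F G)) = 0 ∧
        eval α (setZero e₁ (dualPoly F G)) = 0} := by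
  classical
  haveI : Nonempty V := hG.nonempty
  obtain ⟨v₀⟩ : Nonempty V := inferInstance
  set q := Fintype.card F with hq
  set u : {v // v ∈ (Finset.univ : Finset V).erase v₀} → F := Stmt8.cvec G v₀ e₁ with hu
  set P : (G.edgeSet → F) → Prop := fun α => α e₁ = 0 ∧
    eval α (pderiv e₁ (dualPoly F G)) = 0 ∧ eval α (setZero e₁ (dualPoly F G)) = 0 with hP
  -- the χ function
  set χ : (G.edgeSet → F) → ({v // v ∈ (Finset.univ : Finset V).erase v₀} → F) → ZMod q :=
    fun α v => if α e₁ = 0 ∧ v ≠ 0 ∧ dotProduct u v = 0 ∧ Matrix.mulVec (Stmt8.Lmat G v₀ α) v = 0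
      then (1 : ZMod q) else 0 with hχ
  -- key equivalence
  have key : ∀ α : G.edgeSet → F, α e₁ = 0 →
      ((eval α (pderiv e₁ (dualPoly F G)) = 0 ∧ eval α (setZero e₁ (dualPoly F G)) = 0) ↔
        ∃ v, v ≠ 0 ∧ Matrix.mulVec (Stmt8.Lmat G v₀ α) v = 0 ∧ dotProduct u v = 0) := by
    intro α hα
    have e0 : (Stmt8.Lmat G v₀ α).det = eval α (setZero e₁ (dualPoly F G)) := by
      have h1 := Stmt8.matrixTree G v₀ hG (Function.update α e₁ (0:F))
      rw [Stmt8.eval_update_dualPoly, zero_mul, zero_add] at h1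
      rw [← h1]
      congr 1
      rw [← hα, Function.update_eq_self]
    have e1 : (Stmt8.Lmat G v₀ α + Matrix.vecMulVec u u).det =
        eval α (pderiv e₁ (dualPoly F G)) + eval α (setZero e₁ (dualPoly F G)) := by
      have h1 := Stmt8.matrixTree G v₀ hG (Function.update α e₁ (1:F))
      rw [Stmt8.eval_update_dualPoly, one_mul] at h1
      rw [← h1, Stmt8.Lmat_update G v₀ e₁ α hα, hu]
    have hpencil := Stmt8.pencil (Stmt8.Lmat G v₀ α) (Stmt8.Lmat_isSymm G v₀ α) u
    constructor
    · rintro ⟨ha, hb⟩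
      exact hpencil.mp ⟨by rw [e0, hb], by rw [e1, ha, hb, add_zero]⟩
    · intro hex
      obtain ⟨hd0, hd1⟩ := hpencil.mpr hex
      rw [e0] at hd0
      rw [e1, hd0, add_zero] at hd1
      exact ⟨hd1, hd0⟩
  -- per-row lemma
  have hrow : ∀ α : G.edgeSet → F,
      (if P α then (1 : ZMod q) else 0) + ∑ v, χ α v = 0 := by
    intro α
    by_cases hα : α e₁ = 0
    · -- the kernel submodule
      set dotu : ({v // v ∈ (Finset.univ : Finset V).erase v₀} → F) →ₗ[F] F :=
        { toFun := fun v => dotProduct u v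
          map_add' := fun x y => dotProduct_add u x y
          map_smul' := fun c x => by
            simp only [RingHom.id_apply, smul_eq_mul, dotProduct,
              Pi.smul_apply, Finset.mul_sum]
            exact Finset.sum_congr rfl fun j _ => by ring } with hdotu
      set K : Submodule F ({v // v ∈ (Finset.univ : Finset V).erase v₀} → F) :=
        LinearMap.ker (LinearMap.prod dotu (Stmt8.Lmat G v₀ α).mulVecLin) with hK
      have hmemK : ∀ v, v ∈ K ↔ (dotProduct u v = 0 ∧ Matrix.mulVec (Stmt8.Lmat G v₀ α) v = 0) := by
        intro v
        rw [hK, LinearMap.mem_ker]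
        simp only [LinearMap.prod_apply, Function.prod_apply, Prod.mk_eq_zero, Matrix.mulVecLin_apply,
          hdotu, LinearMap.coe_mk, AddHom.coe_mk]
      have hχval : ∀ v, χ α v = if (v ∈ K ∧ v ≠ 0) then (1 : ZMod q) else 0 := by
        intro v
        simp only [hχ]
        by_cases h : v ∈ K ∧ v ≠ 0
        · rw [if_pos h, if_pos]
          obtain ⟨hu0, hL0⟩ := (hmemK v).mp h.1
          exact ⟨hα, h.2, hu0, hL0⟩
        · rw [if_neg h, if_neg]
          intro hc
          exact h ⟨(hmemK v).mpr ⟨hc.2.2.1, hc.2.2.2⟩, hc.2.1⟩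
      have hfilter : (Finset.univ.filter (fun v => v ∈ K)) =
          insert 0 (Finset.univ.filter (fun v => v ∈ K ∧ v ≠ 0)) := by
        ext v
        simp only [Finset.mem_filter, Finset.mem_univ, true_and, Finset.mem_insert]
        constructor
        · intro hv
          by_cases h0 : v = 0
          · exact Or.inl h0
          · exact Or.inr ⟨hv, h0⟩
        · rintro (rfl | ⟨hv, _⟩)
          · exact K.zero_mem
          · exact hv
      have hcount : ((Finset.univ.filter (fun v => v ∈ K ∧ v ≠ 0)).card + 1 : ℕ) =
          Fintype.card K := by
        rw [Fintype.card_subtype, hfilter, Finset.card_insert_of_notMem (by simp)]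
      have hsumχ : ∑ v, χ α v =
          ((Finset.univ.filter (fun v => v ∈ K ∧ v ≠ 0)).card : ZMod q) := by
        rw [Finset.sum_congr rfl fun v _ => hχval v, Finset.sum_boole]
      by_cases hbot : K = ⊥
      · have hP0 : ¬ P α := by
          rw [hP]
          rintro ⟨_, ha, hb⟩
          obtain ⟨v, hv0, hvL, hvu⟩ := (key α hα).mp ⟨ha, hb⟩
          have : v ∈ K := (hmemK v).mpr ⟨hvu, hvL⟩
          rw [hbot, Submodule.mem_bot] at this
          exact hv0 this
        rw [if_neg hP0, zero_add, hsumχ]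
        have : (Finset.univ.filter (fun v => v ∈ K ∧ v ≠ 0)) = ∅ := by
          ext v
          simp only [Finset.mem_filter, Finset.notMem_empty, iff_false, Finset.mem_univ,
            true_and, not_and]
          intro hv
          rw [hbot, Submodule.mem_bot] at hv
          simp [hv]
        rw [this]
        simp
      · have hP1 : P α := by
          obtain ⟨v, hvK, hv0⟩ := (Submodule.ne_bot_iff K).mp hbot
          obtain ⟨hvu, hvL⟩ := (hmemK v).mp hvK
          exact ⟨hα, (key α hα).mpr ⟨v, hv0, hvL, hvu⟩⟩
        rw [if_pos hP1, hsumχ]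
        have hcard0 : ((Fintype.card K : ℕ) : ZMod q) = 0 := by
          have := Stmt8.card_submodule_cast q hq K hbot
          rwa [Nat.card_eq_fintype_card] at this
        have := congrArg (fun n : ℕ => (n : ZMod q)) hcount
        simp only [Nat.cast_add, Nat.cast_one] at this
        rw [hcard0] at this
        linear_combination this
    · rw [if_neg (by rw [hP]; exact fun hc => hα hc.1), zero_add]
      refine Finset.sum_eq_zero fun v _ => ?_
      simp only [hχ]
      rw [if_neg (fun hc => hα hc.1)]
  -- per-column lemma
  have hcol : ∀ v : {v // v ∈ (Finset.univ : Finset V).erase v₀} → F,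
      ∑ α : G.edgeSet → F, χ α v = 0 := by
    intro v
    by_cases hv : v ≠ 0 ∧ dotProduct u v = 0
    · set Mv : Matrix {v // v ∈ (Finset.univ : Finset V).erase v₀} G.edgeSet F :=
        Matrix.of (fun i e => Stmt8.cvec G v₀ e i * (dotProduct (Stmt8.cvec G v₀ e) v)) with hMv
      have hLv : ∀ α : G.edgeSet → F, Matrix.mulVec Mv α = Matrix.mulVec (Stmt8.Lmat G v₀ α) v := by
        intro α
        funext i
        show ∑ e, Mv i e * α e = ∑ j, (Stmt8.Lmat G v₀ α) i j * v j
        calc ∑ e, Mv i e * α e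
            = ∑ e, ∑ j, α e * Stmt8.cvec G v₀ e i * Stmt8.cvec G v₀ e j * v j := by
              refine Finset.sum_congr rfl fun e _ => ?_
              simp only [hMv, Matrix.of_apply, dotProduct, Finset.mul_sum,
                Finset.sum_mul]
              exact Finset.sum_congr rfl fun j _ => by ring
          _ = ∑ j, ∑ e, α e * Stmt8.cvec G v₀ e i * Stmt8.cvec G v₀ e j * v j :=
              Finset.sum_comm
          _ = ∑ j, (Stmt8.Lmat G v₀ α) i j * v j := by
              refine Finset.sum_congr rfl fun j _ => ?_
              simp only [Stmt8.Lmat, Matrix.of_apply, Finset.sum_mul]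
      set Kv : Submodule F (G.edgeSet → F) :=
        LinearMap.ker (LinearMap.prod (LinearMap.proj e₁) Mv.mulVecLin) with hKv
      have hmemKv : ∀ α, α ∈ Kv ↔ (α e₁ = 0 ∧ Matrix.mulVec (Stmt8.Lmat G v₀ α) v = 0) := by
        intro α
        rw [hKv, LinearMap.mem_ker]
        simp only [LinearMap.prod_apply, Function.prod_apply, Prod.mk_eq_zero, Matrix.mulVecLin_apply,
          LinearMap.proj_apply, hLv α]
      have hKvbot : Kv ≠ ⊥ := by
        intro hbot
        have hrank := LinearMap.finrank_range_add_finrank_ker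
          (LinearMap.prod (LinearMap.proj (R := F) (φ := fun _ : G.edgeSet => F) e₁)
            Mv.mulVecLin)
        rw [← hKv, hbot, finrank_bot, add_zero] at hrank
        have hle : Module.finrank F (LinearMap.range (LinearMap.prod
            (LinearMap.proj (R := F) (φ := fun _ : G.edgeSet => F) e₁) Mv.mulVecLin)) ≤
            Module.finrank F (F × ({v // v ∈ (Finset.univ : Finset V).erase v₀} → F)) :=
          Submodule.finrank_le _
        rw [hrank] at hle
        have hd1 : Module.finrank F (G.edgeSet → F) = Fintype.card G.edgeSet :=
          Module.finrank_pi F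
        have hd2 : Module.finrank F (F × ({v // v ∈ (Finset.univ : Finset V).erase v₀} → F))
            = 1 + (Fintype.card V - 1) := by
          rw [Module.finrank_prod, Module.finrank_self, Module.finrank_pi, Stmt8.card_iota]
        have hV1 : 1 ≤ Fintype.card V := Fintype.card_pos
        rw [hd1, hd2] at hle
        omega
      have hχval : ∀ α, χ α v = if α ∈ Kv then (1 : ZMod q) else 0 := by
        intro α
        simp only [hχ]
        by_cases h : α ∈ Kv
        · rw [if_pos h, if_pos]
          obtain ⟨h1, h2⟩ := (hmemKv α).mp h
          exact ⟨h1, hv.1, hv.2, h2⟩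
        · rw [if_neg h, if_neg]
          intro hc
          exact h ((hmemKv α).mpr ⟨hc.1, hc.2.2.2⟩)
      rw [Finset.sum_congr rfl fun α _ => hχval α]
      rw [Finset.sum_boole]
      have hcard0 : ((Fintype.card Kv : ℕ) : ZMod q) = 0 := by
        have := Stmt8.card_submodule_cast q hq Kv hKvbot
        rwa [Nat.card_eq_fintype_card] at this
      rw [show (Finset.univ.filter (fun α => α ∈ Kv)).card = Fintype.card Kv from
        (Fintype.card_subtype _).symm]
      exact hcard0
    · refine Finset.sum_eq_zero fun α _ => ?_
      simp only [hχ]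
      rw [if_neg (fun hc => hv ⟨hc.2.1, hc.2.2.1⟩)]
  -- assembly
  have hNat : Nat.card {α : G.edgeSet → F // P α} = (Finset.univ.filter P).card := by
    rw [Nat.card_eq_fintype_card, Fintype.card_subtype]
  rw [show Nat.card {α : G.edgeSet → F //
      α e₁ = 0 ∧ eval α (pderiv e₁ (dualPoly F G)) = 0 ∧
        eval α (setZero e₁ (dualPoly F G)) = 0} = Nat.card {α : G.edgeSet → F // P α} from rfl]
  rw [hNat, ← ZMod.natCast_eq_zero_iff]
  have htot : ((Finset.univ.filter P).card : ZMod q) + ∑ α : G.edgeSet → F, ∑ v, χ α v = 0 := by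
    rw [Finset.card_filter]
    rw [Nat.cast_sum]
    rw [← Finset.sum_add_distrib]
    rw [Finset.sum_congr rfl fun α _ => ?_]
    · exact Finset.sum_const_zero
    · rw [← hrow α]
      congr 1
      split <;> simp
  have hzero : ∑ α : G.edgeSet → F, ∑ v, χ α v = 0 := by
    rw [Finset.sum_comm]
    exact Finset.sum_eq_zero fun v _ => hcol v
  rw [hzero, add_zero] at htot
  exact htot
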